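/- (Proposition 1) For every horizon m ≥ 0, every n > 0 and all μ̃ < μ: if V_m(μ,n,γ,τ,λ) = 0 then V_m(μ̃,n,γ,τ,λ) = 0. -/

import Mathlib

open MeasureTheory ProbabilityTheory
open scoped NNReal ENNReal Real

/-- Finite-horizon value function of the Gaussian one-armed bandit:
`V γ τ m μ n λ`, with discount `γ`, observation precision `τ`, horizon `m`,
posterior state `(μ, n)` and safe-arm reward `λ`. The expectation over the
next observation is taken under the Gaussian predictive distribution
`𝒩(μ, 1/n + 1/τ)`. -/
noncomputable def V (γ τ : ℝ) : ℕ → ℝ → ℝ → ℝ → ℝ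
  | 0, μ, _n, lam => max (μ - lam) 0 / (1 - γ)
  | m + 1, μ, n, lam =>
      max (μ - lam + γ * ∫ y, V γ τ m ((n * μ + τ * y) / (n + τ)) (n + τ) lam
        ∂(gaussianReal μ (1 / n + 1 / τ).toNNReal)) 0

namespace NmabAux

lemma integrable_id_gaussian (μ : ℝ) (v : ℝ≥0) (hv : v ≠ 0) :
    Integrable (fun x : ℝ => x) (gaussianReal μ v) := by
  rw [gaussianReal_of_var_ne_zero μ hv,
    integrable_withDensity_iff (measurable_gaussianPDF μ v)
      (Filter.Eventually.of_forall fun x => ENNReal.ofReal_lt_top)]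
  have hvpos : (0:ℝ) < (v : ℝ) := by exact_mod_cast pos_iff_ne_zero.mpr hv
  have hb : (0:ℝ) < (2 * (v:ℝ))⁻¹ := by positivity
  have h1 : Integrable (fun x : ℝ => (x - μ) * Real.exp (-(2*(v:ℝ))⁻¹ * (x-μ)^2)) :=
    (integrable_mul_exp_neg_mul_sq hb).comp_sub_right μ
  have h2 : Integrable (fun x : ℝ => Real.exp (-(2*(v:ℝ))⁻¹ * (x-μ)^2)) :=
    (integrable_exp_neg_mul_sq hb).comp_sub_right μ
  have h4 := (h1.add (h2.const_mul μ)).const_mul ((Real.sqrt (2 * Real.pi * v))⁻¹)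
  refine h4.congr (Filter.Eventually.of_forall fun x => ?_)
  simp only [gaussianPDF, gaussianPDFReal, Pi.add_apply]
  rw [ENNReal.toReal_ofReal (by positivity)]
  have hexp : -(2*(v:ℝ))⁻¹ * (x-μ)^2 = -(x - μ)^2 / (2 * v) := by
    field_simp
  rw [hexp]
  ring

lemma integrable_abs_gaussian (μ : ℝ) (v : ℝ≥0) (hv : v ≠ 0) :
    Integrable (fun x : ℝ => |x|) (gaussianReal μ v) :=
  (integrable_id_gaussian μ v hv).abs

lemma V_nonneg (γ τ lam : ℝ) (hγ1 : γ < 1) :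
    ∀ (m : ℕ) (μ n : ℝ), 0 ≤ V γ τ m μ n lam := by
  intro m μ n
  cases m with
  | zero =>
      simp only [V]
      exact div_nonneg (le_max_right _ _) (by linarith)
  | succ m =>
      simp only [V]
      exact le_max_right _ _

lemma aux_ptwise (γ τ lam : ℝ) (m : ℕ) (n C : ℝ) (hn : 0 < n) (hτ : 0 < τ)
    (hC0 : 0 ≤ C)
    (hC : ∀ μ : ℝ, V γ τ m μ (n + τ) lam ≤ C * (1 + |μ|)) (p y : ℝ) :
    V γ τ m ((n * p + τ * y) / (n + τ)) (n + τ) lam ≤ C * (1 + |p|) + C * |y| := by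
  have hnτ : 0 < n + τ := by linarith
  calc V γ τ m ((n * p + τ * y) / (n + τ)) (n + τ) lam
      ≤ C * (1 + |(n * p + τ * y) / (n + τ)|) := hC _
    _ ≤ C * (1 + |p|) + C * |y| := by
        have h1 : |(n * p + τ * y) / (n + τ)| ≤ |p| + |y| := by
          rw [abs_div, abs_of_pos hnτ, div_le_iff₀ hnτ]
          calc |n * p + τ * y| ≤ |n * p| + |τ * y| := abs_add_le _ _
            _ = n * |p| + τ * |y| := by
                rw [abs_mul, abs_mul, abs_of_pos hn, abs_of_pos hτ]
            _ ≤ (|p| + |y|) * (n + τ) := by nlinarith [abs_nonneg p, abs_nonneg y]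
        nlinarith [abs_nonneg p, abs_nonneg y]

lemma aux_integrable (γ τ lam : ℝ) (hγ1 : γ < 1) (m : ℕ) (n p c : ℝ)
    (hn : 0 < n) (hτ : 0 < τ)
    (hmono : Monotone fun x => V γ τ m x (n + τ) lam)
    (C : ℝ) (hC0 : 0 ≤ C)
    (hC : ∀ μ : ℝ, V γ τ m μ (n + τ) lam ≤ C * (1 + |μ|)) :
    Integrable (fun y => V γ τ m ((n * p + τ * y) / (n + τ)) (n + τ) lam)
      (gaussianReal c (1 / n + 1 / τ).toNNReal) := by
  have hνne : ((1 / n + 1 / τ).toNNReal : ℝ≥0) ≠ 0 := by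
    have : (0:ℝ) < 1 / n + 1 / τ := by positivity
    simpa using (Real.toNNReal_pos.mpr this).ne'
  have hmeas : Measurable fun y : ℝ =>
      V γ τ m ((n * p + τ * y) / (n + τ)) (n + τ) lam :=
    hmono.measurable.comp (by fun_prop)
  have hdom : Integrable (fun y : ℝ => C * (1 + |p|) + C * |y|)
      (gaussianReal c (1 / n + 1 / τ).toNNReal) :=
    (integrable_const _).add ((integrable_abs_gaussian c _ hνne).const_mul C)
  refine hdom.mono' hmeas.aestronglyMeasurable (Filter.Eventually.of_forall fun y => ?_)
  rw [Real.norm_eq_abs, abs_of_nonneg (V_nonneg γ τ lam hγ1 _ _ _)]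
  exact aux_ptwise γ τ lam m n C hn hτ hC0 hC p y

lemma V_key (γ τ lam : ℝ) (hγ0 : 0 ≤ γ) (hγ1 : γ < 1) (hτ : 0 < τ) :
    ∀ m : ℕ,
      (∀ n : ℝ, 0 < n → ∀ μt μ : ℝ, μt ≤ μ →
        V γ τ m μt n lam ≤ V γ τ m μ n lam) ∧
      (∀ n : ℝ, 0 < n → ∃ C : ℝ, 0 ≤ C ∧ ∀ μ : ℝ,
        V γ τ m μ n lam ≤ C * (1 + |μ|)) := by
  intro m
  induction m with
  | zero =>
      have h1γ : (0:ℝ) < 1 - γ := by linarith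
      constructor
      · intro n hn μt μ hle
        simp only [V]
        have hmm : max (μt - lam) 0 ≤ max (μ - lam) 0 :=
          max_le_max (sub_le_sub_right hle lam) le_rfl
        exact div_le_div_of_nonneg_right hmm h1γ.le
      · intro n hn
        refine ⟨(1 + |lam|) / (1 - γ), by positivity, fun μ => ?_⟩
        simp only [V]
        rw [div_mul_eq_mul_div]
        gcongr
        apply max_le
        · have h1 := abs_nonneg μ
          have h2 := neg_abs_le lam
          have h3 := le_abs_self μ
          nlinarith [mul_nonneg (abs_nonneg lam) (abs_nonneg μ)]
        · positivity
  | succ m ih =>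
      obtain ⟨ihmono, ihbound⟩ := ih
      constructor
      · -- monotonicity
        intro n hn μt μ hle
        have hnτ : 0 < n + τ := by linarith
        obtain ⟨C, hC0, hC⟩ := ihbound (n + τ) hnτ
        have hmono : Monotone fun x => V γ τ m x (n + τ) lam :=
          fun a b hab => ihmono (n + τ) hnτ a b hab
        have hνne : ((1 / n + 1 / τ).toNNReal : ℝ≥0) ≠ 0 := by
          have : (0:ℝ) < 1 / n + 1 / τ := by positivity
          simpa using (Real.toNNReal_pos.mpr this).ne'
        simp only [V]
        have hmap : Measure.map (· + (μ - μt)) (gaussianReal μt (1 / n + 1 / τ).toNNReal)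
            = gaussianReal μ (1 / n + 1 / τ).toNNReal := by
          rw [gaussianReal_map_add_const]
          congr 1
          ring
        have hIeq : (∫ y, V γ τ m ((n * μ + τ * y) / (n + τ)) (n + τ) lam
              ∂(gaussianReal μ (1 / n + 1 / τ).toNNReal))
            = ∫ y, V γ τ m ((n * μ + τ * (y + (μ - μt))) / (n + τ)) (n + τ) lam
              ∂(gaussianReal μt (1 / n + 1 / τ).toNNReal) := by
          have hmeasf : Measurable fun y : ℝ =>
              V γ τ m ((n * μ + τ * y) / (n + τ)) (n + τ) lam :=
            hmono.measurable.comp (by fun_prop)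
          rw [← hmap, integral_map
            ((by fun_prop : Measurable fun x : ℝ => x + (μ - μt)).aemeasurable)
            hmeasf.aestronglyMeasurable]
        have hbig : Integrable
            (fun y => V γ τ m ((n * μ + τ * (y + (μ - μt))) / (n + τ)) (n + τ) lam)
            (gaussianReal μt (1 / n + 1 / τ).toNNReal) := by
          have h := aux_integrable γ τ lam hγ1 m n (μ + τ * (μ - μt) / n) μt hn hτ hmono C hC0 hC
          refine h.congr (Filter.Eventually.of_forall fun y => ?_)
          simp only []
          have harg : (n * (μ + τ * (μ - μt) / n) + τ * y) / (n + τ)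
              = (n * μ + τ * (y + (μ - μt))) / (n + τ) := by
            field_simp
            ring
          simp only [harg]
        have hI : (∫ y, V γ τ m ((n * μt + τ * y) / (n + τ)) (n + τ) lam
              ∂(gaussianReal μt (1 / n + 1 / τ).toNNReal))
            ≤ ∫ y, V γ τ m ((n * μ + τ * y) / (n + τ)) (n + τ) lam
              ∂(gaussianReal μ (1 / n + 1 / τ).toNNReal) := by
          rw [hIeq]
          refine integral_mono (aux_integrable γ τ lam hγ1 m n μt μt hn hτ hmono C hC0 hC)
            hbig fun y => ?_
          apply hmono
          have h1 : n * μt + τ * y ≤ n * μ + τ * (y + (μ - μt)) := by nlinarith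
          exact div_le_div_of_nonneg_right h1 hnτ.le
        refine max_le_max ?_ le_rfl
        have h2 := mul_le_mul_of_nonneg_left hI hγ0
        linarith
      · -- linear growth bound
        intro n hn
        have hnτ : 0 < n + τ := by linarith
        obtain ⟨C, hC0, hC⟩ := ihbound (n + τ) hnτ
        have hmono : Monotone fun x => V γ τ m x (n + τ) lam :=
          fun a b hab => ihmono (n + τ) hnτ a b hab
        have hνne : ((1 / n + 1 / τ).toNNReal : ℝ≥0) ≠ 0 := by
          have : (0:ℝ) < 1 / n + 1 / τ := by positivity
          simpa using (Real.toNNReal_pos.mpr this).ne'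
        set K := ∫ x, |x| ∂(gaussianReal (0:ℝ) (1 / n + 1 / τ).toNNReal) with hKdef
        have hK0 : 0 ≤ K := integral_nonneg fun x => abs_nonneg x
        refine ⟨1 + |lam| + γ * C * (1 + K) + 2 * γ * C, by positivity, fun μ => ?_⟩
        simp only [V]
        have habs : (∫ y, |y| ∂(gaussianReal μ (1 / n + 1 / τ).toNNReal)) ≤ |μ| + K := by
          have hmap : Measure.map (· + μ) (gaussianReal (0:ℝ) (1 / n + 1 / τ).toNNReal)
              = gaussianReal μ (1 / n + 1 / τ).toNNReal := by
            rw [gaussianReal_map_add_const]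
            congr 1
            ring
          rw [← hmap, integral_map
            ((by fun_prop : Measurable fun x : ℝ => x + μ).aemeasurable)
            measurable_abs.aestronglyMeasurable]
          have hle : (∫ x, |x + μ| ∂(gaussianReal (0:ℝ) (1 / n + 1 / τ).toNNReal))
              ≤ ∫ x, (|x| + |μ|) ∂(gaussianReal (0:ℝ) (1 / n + 1 / τ).toNNReal) := by
            refine integral_mono ?_ ?_ fun x => abs_add_le x μ
            · exact ((integrable_id_gaussian 0 _ hνne).add (integrable_const μ)).abs
            · exact (integrable_abs_gaussian 0 _ hνne).add (integrable_const _)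
          refine hle.trans ?_
          rw [integral_add (integrable_abs_gaussian 0 _ hνne) (integrable_const _),
            integral_const, ← hKdef]
          simp only [measure_univ, ENNReal.toReal_one, probReal_univ, smul_eq_mul, one_mul]
          linarith
        have hI : (∫ y, V γ τ m ((n * μ + τ * y) / (n + τ)) (n + τ) lam
              ∂(gaussianReal μ (1 / n + 1 / τ).toNNReal))
            ≤ C * (1 + |μ|) + C * (|μ| + K) := by
          have h1 : (∫ y, V γ τ m ((n * μ + τ * y) / (n + τ)) (n + τ) lam
                ∂(gaussianReal μ (1 / n + 1 / τ).toNNReal))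
              ≤ ∫ y, (C * (1 + |μ|) + C * |y|)
                ∂(gaussianReal μ (1 / n + 1 / τ).toNNReal) := by
            refine integral_mono (aux_integrable γ τ lam hγ1 m n μ μ hn hτ hmono C hC0 hC)
              ((integrable_const _).add ((integrable_abs_gaussian μ _ hνne).const_mul C))
              fun y => aux_ptwise γ τ lam m n C hn hτ hC0 hC μ y
          rw [integral_add (integrable_const _)
            ((integrable_abs_gaussian μ _ hνne).const_mul C), integral_const,
            integral_const_mul] at h1
          simp only [measure_univ, ENNReal.toReal_one, probReal_univ, smul_eq_mul, one_mul] at h1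
          have h2 : C * ∫ y, |y| ∂(gaussianReal μ (1 / n + 1 / τ).toNNReal)
              ≤ C * (|μ| + K) := mul_le_mul_of_nonneg_left habs hC0
          linarith
        apply max_le
        · have h3 := mul_le_mul_of_nonneg_left hI hγ0
          have h4 := abs_nonneg μ
          have h5 := le_abs_self μ
          have h6 := neg_abs_le lam
          nlinarith [mul_nonneg (mul_nonneg hγ0 hC0) hK0,
            mul_nonneg (abs_nonneg lam) (abs_nonneg μ),
            mul_nonneg (mul_nonneg hγ0 hC0) (abs_nonneg μ),
            mul_nonneg (mul_nonneg (mul_nonneg hγ0 hC0) hK0) (abs_nonneg μ),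
            mul_nonneg hγ0 hC0]
        · positivity

end NmabAux

/-- Proposition 1: for every horizon `m`, every `n > 0` and all `μ̃ < μ`,
if `V_m(μ,n,γ,τ,λ) = 0` then `V_m(μ̃,n,γ,τ,λ) = 0`. -/
theorem nmab_retire_below (γ τ lam : ℝ)
    (hγ0 : 0 ≤ γ) (hγ1 : γ < 1) (hτ : 0 < τ) :
    ∀ m : ℕ, ∀ μt μ n : ℝ, 0 < n → μt < μ →
      V γ τ m μ n lam = 0 → V γ τ m μt n lam = 0 := by
  intro m μt μ n hn hlt h0
  have hmono := (NmabAux.V_key γ τ lam hγ0 hγ1 hτ m).1 n hn μt μ hlt.le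
  have hnn := NmabAux.V_nonneg γ τ lam hγ1 m μt n
  rw [h0] at hmono
  exact le_antisymm hmono hnn
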